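/- Let θ, θ' in R² with ||θ||_2 ≥ D and ||θ − θ'||_2 ≤ r, and let v, v' in C^n with ||[v]^T θ − p||_2 < α and [v']^T θ' = p for some p in Z^{2n}, with ||v'||_2 ≤ (α+2D)/D. If r = Dα/(α+2D) and ||v||_2 = 1, then ||v − v'||_2 ≤ 2α/D. -/

import Mathlib

open Finset Matrix

noncomputable def vmat {n : ℕ} (v : Fin n → ℂ) : Matrix (Fin 2) (Fin n ⊕ Fin n) ℝ :=
  Matrix.of fun i => Sum.elim
    (fun j => if i = 0 then (v j).re else (v j).im)
    (fun j => if i = 0 then -(v j).im else (v j).re)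

lemma vmat_key {n : ℕ} (w : Fin n → ℂ) (θ : Fin 2 → ℝ) :
    ∑ k, ((vmat w)ᵀ.mulVec θ k) ^ 2
      = (∑ j, ‖w j‖ ^ 2) * (∑ i, θ i ^ 2) := by
  simp only [Matrix.mulVec, Matrix.transpose_apply, dotProduct,
    Fin.sum_univ_two, vmat, Matrix.of_apply, Fintype.sum_sum_type,
    Sum.elim_inl, Sum.elim_inr, Complex.sq_norm, Complex.normSq_apply,
    if_pos rfl]
  rw [← Finset.sum_add_distrib, Finset.sum_mul]
  apply Finset.sum_congr rfl
  intro j _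
  norm_num
  ring

lemma sqrt_key {n : ℕ} (w : Fin n → ℂ) (θ : Fin 2 → ℝ) :
    Real.sqrt (∑ k, ((vmat w)ᵀ.mulVec θ k) ^ 2)
      = Real.sqrt (∑ j, ‖w j‖ ^ 2) * Real.sqrt (∑ i, θ i ^ 2) := by
  rw [vmat_key, Real.sqrt_mul (Finset.sum_nonneg fun j _ => sq_nonneg _)]

lemma vmat_sub {n : ℕ} (v v' : Fin n → ℂ) (θ : Fin 2 → ℝ) :
    (vmat (v - v'))ᵀ.mulVec θ
      = (vmat v)ᵀ.mulVec θ - (vmat v')ᵀ.mulVec θ := by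
  funext k
  simp only [Matrix.mulVec, Matrix.transpose_apply, dotProduct,
    Fin.sum_univ_two, vmat, Matrix.of_apply, Pi.sub_apply]
  cases k with
  | inl j => simp [Complex.sub_re, Complex.sub_im]; ring
  | inr j => simp [Complex.sub_re, Complex.sub_im]; ring

lemma sqrt_sum_eq_norm {ι : Type*} [Fintype ι] (x : ι → ℝ) :
    Real.sqrt (∑ i, x i ^ 2) = ‖(WithLp.equiv 2 (ι → ℝ)).symm x‖ := by
  rw [EuclideanSpace.norm_eq]
  congr 1
  apply Finset.sum_congr rfl
  intro i _
  rw [show ((WithLp.equiv 2 (ι → ℝ)).symm x).ofLp i = x i from rfl, Real.norm_eq_abs, sq_abs]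

lemma sqrt_tri {ι : Type*} [Fintype ι] (a b c : ι → ℝ) :
    Real.sqrt (∑ k, (a k - c k) ^ 2)
      ≤ Real.sqrt (∑ k, (a k - b k) ^ 2) + Real.sqrt (∑ k, (b k - c k) ^ 2) := by
  rw [sqrt_sum_eq_norm (fun k => a k - c k), sqrt_sum_eq_norm (fun k => a k - b k),
    sqrt_sum_eq_norm (fun k => b k - c k)]
  have h : (WithLp.equiv 2 (ι → ℝ)).symm (fun k => a k - c k)
      = (WithLp.equiv 2 (ι → ℝ)).symm (fun k => a k - b k)
        + (WithLp.equiv 2 (ι → ℝ)).symm (fun k => b k - c k) := by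
    ext k
    show a k - c k = (a k - b k) + (b k - c k)
    ring
  rw [h]
  exact norm_add_le _ _

theorem stmt15 (n : ℕ) (θ θ' : Fin 2 → ℝ) (v v' : Fin n → ℂ)
    (p : Fin n ⊕ Fin n → ℤ) (α D r : ℝ) (hα : 0 < α) (hD : 0 < D)
    (hθD : D ≤ Real.sqrt (∑ i, θ i ^ 2))
    (hθθ' : Real.sqrt (∑ i, (θ i - θ' i) ^ 2) ≤ r)
    (happ : Real.sqrt (∑ k, ((vmat v)ᵀ.mulVec θ k - (p k : ℝ)) ^ 2) < α)
    (hexact : ∀ k, (vmat v')ᵀ.mulVec θ' k = (p k : ℝ))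
    (hv' : Real.sqrt (∑ j, ‖v' j‖ ^ 2) ≤ (α + 2 * D) / D)
    (hr : r = D * α / (α + 2 * D))
    (hv : Real.sqrt (∑ j, ‖v j‖ ^ 2) = 1) :
    Real.sqrt (∑ j, ‖v j - v' j‖ ^ 2) ≤ 2 * α / D := by
  have hT : (0:ℝ) < Real.sqrt (∑ i, θ i ^ 2) := lt_of_lt_of_le hD hθD
  set N := Real.sqrt (∑ j, ‖v j - v' j‖ ^ 2) with hN
  have hNnn : 0 ≤ N := Real.sqrt_nonneg _
  have hr0 : 0 ≤ r := le_trans (Real.sqrt_nonneg _) hθθ'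
  set a := (vmat v)ᵀ.mulVec θ with ha
  set b : Fin n ⊕ Fin n → ℝ := fun k => (p k : ℝ) with hb
  set c := (vmat v')ᵀ.mulVec θ with hc
  have key : N * Real.sqrt (∑ i, θ i ^ 2) ≤ 2 * α := by
    have h1 : N * Real.sqrt (∑ i, θ i ^ 2)
        = Real.sqrt (∑ k, (a k - c k) ^ 2) := by
      rw [hN, ← sqrt_key]
      congr 1
      apply Finset.sum_congr rfl
      intro k _
      rw [show (fun j => v j - v' j) = v - v' from rfl, vmat_sub]
      rfl
    have e1 : Real.sqrt (∑ k, (a k - b k) ^ 2) ≤ α := le_of_lt happ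
    have e2 : Real.sqrt (∑ k, (b k - c k) ^ 2) ≤ α := by
      have h3 : ∀ k, b k - c k = (vmat v')ᵀ.mulVec (θ' - θ) k := by
        intro k
        rw [Matrix.mulVec_sub]
        simp [hb, hexact k, hc]
      calc Real.sqrt (∑ k, (b k - c k) ^ 2)
          = Real.sqrt (∑ k, ((vmat v')ᵀ.mulVec (θ' - θ) k) ^ 2) := by
            congr 1; exact Finset.sum_congr rfl fun k _ => by rw [h3]
        _ = Real.sqrt (∑ j, ‖v' j‖ ^ 2)
              * Real.sqrt (∑ i, (θ' - θ) i ^ 2) := sqrt_key v' (θ' - θ)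
        _ ≤ ((α + 2 * D) / D) * r := by
            apply mul_le_mul hv' ?_ (Real.sqrt_nonneg _)
              (le_trans (Real.sqrt_nonneg _) hv')
            have : (∑ i, (θ' - θ) i ^ 2) = ∑ i, (θ i - θ' i) ^ 2 := by
              apply Finset.sum_congr rfl
              intro i _
              simp [Pi.sub_apply]
              ring
            rw [this]
            exact hθθ'
        _ = α := by
            rw [hr]
            have h2D : α + 2 * D ≠ 0 := by positivity
            field_simp
    calc N * Real.sqrt (∑ i, θ i ^ 2) = Real.sqrt (∑ k, (a k - c k) ^ 2) := h1
      _ ≤ Real.sqrt (∑ k, (a k - b k) ^ 2) + Real.sqrt (∑ k, (b k - c k) ^ 2) :=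
          sqrt_tri a b c
      _ ≤ α + α := add_le_add e1 e2
      _ = 2 * α := by ring
  rw [le_div_iff₀ hD]
  calc N * D ≤ N * Real.sqrt (∑ i, θ i ^ 2) := by
        exact mul_le_mul_of_nonneg_left hθD hNnn
    _ ≤ 2 * α := key
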